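/- Let α ∈ (0,1) and let F and G be cumulative distribution functions with ∫_{−∞}^0 F(y) dy < ∞ and ∫_{−∞}^0 G(y) dy < ∞, with m(F) finite and d(F,G) finite. Then |CVaR_α(G) − CVaR_α(F)| ≤ (1/α) · (1 + max{1, 3·m(F)} / min{α, 1−α}) · ( d(F,G) + d(F,G)² ); that is, CVaR admits the strong-stability modulus of continuity with exponent q = 2 and explicit constant. -/

import Mathlib

open MeasureTheory

/-- A cumulative distribution function: nondecreasing, right-continuous,
tending to `0` at `−∞` and to `1` at `+∞`. -/
def IsCDF (F : ℝ → ℝ) : Prop :=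
  Monotone F ∧ (∀ y : ℝ, ContinuousWithinAt F (Set.Ici y) y) ∧
    Filter.Tendsto F Filter.atBot (nhds 0) ∧ Filter.Tendsto F Filter.atTop (nhds 1)

/-- Value-at-risk at level `α`: `VaR_α(F) = inf{ y : F y ≥ α }`. -/
noncomputable def VaR (α : ℝ) (F : ℝ → ℝ) : ℝ :=
  sInf {y : ℝ | α ≤ F y}

/-- Conditional value-at-risk at level `α`:
`CVaR_α(F) = VaR_α(F) − (1/α) ∫_{−∞}^{VaR_α(F)} F(y) dy`. -/
noncomputable def CVaR (α : ℝ) (F : ℝ → ℝ) : ℝ :=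
  VaR α F - (1 / α) * ∫ y in Set.Iio (VaR α F), F y

/-- `m(F) = max{1, ∫_{−∞}^0 F, ∫_0^∞ (1 − F)}`, a tail-size functional. -/
noncomputable def mTail (F : ℝ → ℝ) : ℝ :=
  max 1 (max (∫ y in Set.Iic (0 : ℝ), F y) (∫ y in Set.Ioi (0 : ℝ), (1 - F y)))

/-- `d(F,G) = max{ sup_y |F−G|, |∫_{−∞}^0 (F−G)|, |∫_0^∞ (F−G)| }`, the norm
distance between two CDFs. -/
noncomputable def dDist (F G : ℝ → ℝ) : ℝ :=
  max (⨆ y : ℝ, |F y - G y|)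
    (max |∫ y in Set.Iic (0 : ℝ), (F y - G y)| |∫ y in Set.Ioi (0 : ℝ), (F y - G y)|)

namespace CVaRAux

open Set Filter

lemma _root_.IsCDF.nonneg {F : ℝ → ℝ} (hF : IsCDF F) (y : ℝ) : 0 ≤ F y :=
  le_of_tendsto hF.2.2.1 (by
    filter_upwards [Filter.eventually_le_atBot y] with z hz using hF.1 hz)

lemma _root_.IsCDF.le_one {F : ℝ → ℝ} (hF : IsCDF F) (y : ℝ) : F y ≤ 1 :=
  ge_of_tendsto hF.2.2.2 (by
    filter_upwards [Filter.eventually_ge_atTop y] with z hz using hF.1 hz)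

lemma _root_.IsCDF.nonempty_S {α : ℝ} (hα1 : α < 1) {F : ℝ → ℝ} (hF : IsCDF F) :
    {y : ℝ | α ≤ F y}.Nonempty :=
  (hF.2.2.2.eventually (eventually_ge_nhds hα1)).exists

lemma _root_.IsCDF.bddBelow_S {α : ℝ} (hα0 : 0 < α) {F : ℝ → ℝ} (hF : IsCDF F) :
    BddBelow {y : ℝ | α ≤ F y} := by
  obtain ⟨z, hz⟩ := Filter.eventually_atBot.1 (hF.2.2.1.eventually (eventually_lt_nhds hα0))
  exact ⟨z, fun y hy => le_of_not_gt fun h => absurd hy (not_le.2 (hz y h.le))⟩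

lemma VaR_le {α : ℝ} (hα0 : 0 < α) {F : ℝ → ℝ} (hF : IsCDF F) {y : ℝ}
    (hy : α ≤ F y) : VaR α F ≤ y :=
  csInf_le (hF.bddBelow_S hα0) hy

lemma alpha_le_F_VaR {α : ℝ} (hα : α ∈ Set.Ioo (0:ℝ) 1) {F : ℝ → ℝ} (hF : IsCDF F) :
    α ≤ F (VaR α F) := by
  have h1 : ∀ y, VaR α F < y → α ≤ F y := by
    intro y hy
    obtain ⟨s, hs, hsy⟩ := exists_lt_of_csInf_lt (hF.nonempty_S hα.2) hy
    exact le_trans hs (hF.1 hsy.le)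
  have h2 : Filter.Tendsto F (nhdsWithin (VaR α F) (Set.Ioi (VaR α F))) (nhds (F (VaR α F))) :=
    (hF.2.1 (VaR α F)).mono Set.Ioi_subset_Ici_self
  exact ge_of_tendsto h2 (eventually_mem_nhdsWithin.mono fun y hy => h1 y hy)

lemma F_lt_alpha_of_lt_VaR {α : ℝ} (hα0 : 0 < α) {F : ℝ → ℝ} (hF : IsCDF F) {y : ℝ}
    (hy : y < VaR α F) : F y < α := by
  by_contra hc
  push_neg at hc
  exact absurd (VaR_le hα0 hF hc) (not_le.2 hy)

lemma integrableOn_Iio {F : ℝ → ℝ} (hF : IsCDF F) (hInt : IntegrableOn F (Iic 0)) (v : ℝ) :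
    IntegrableOn F (Iio v) := by
  rcases le_or_gt v 0 with h | h
  · exact hInt.mono_set fun x hx => le_trans (le_of_lt hx) h
  · have h2 : IntegrableOn F (Icc 0 v) :=
      MonotoneOn.integrableOn_isCompact isCompact_Icc (hF.1.monotoneOn _)
    refine (hInt.union h2).mono_set ?_
    intro x hx
    rcases le_or_gt x 0 with h' | h'
    · exact Or.inl h'
    · exact Or.inr ⟨h'.le, le_of_lt hx⟩

lemma neg_mass {F : ℝ → ℝ} (hF : IsCDF F) (hInt : IntegrableOn F (Iic 0)) {y : ℝ}
    (hy : y ≤ 0) : F y * (-y) ≤ ∫ t in Iic (0:ℝ), F t := by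
  have hIco : IntegrableOn F (Ico y 0) := hInt.mono_set fun x hx => hx.2.le
  have h1 : F y * (-y) = ∫ _t in Ico y 0, F y := by
    rw [setIntegral_const, smul_eq_mul, Real.volume_real_Ico_of_le (by linarith)]
    ring
  rw [h1]
  have h2 : (∫ _t in Ico y 0, F y) ≤ ∫ t in Ico y 0, F t := by
    refine setIntegral_mono_on (integrableOn_const ?_) hIco measurableSet_Ico
      fun t ht => hF.1 ht.1
    rw [Real.volume_Ico]; exact ENNReal.ofReal_ne_top
  refine h2.trans (setIntegral_mono_set hInt ?_ ?_)
  · exact Filter.Eventually.of_forall fun x => hF.nonneg x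
  · exact HasSubset.Subset.eventuallyLE fun x hx => hx.2.le

lemma pos_tail {F : ℝ → ℝ} (hF : IsCDF F) (hInt' : IntegrableOn (fun y => 1 - F y) (Ioi 0))
    {y : ℝ} (hy : 0 ≤ y) : (1 - F y) * y ≤ ∫ t in Ioi (0:ℝ), (1 - F t) := by
  have hIoc : IntegrableOn (fun t => 1 - F t) (Ioc 0 y) := hInt'.mono_set fun x hx => hx.1
  have h1 : (1 - F y) * y = ∫ _t in Ioc 0 y, (1 - F y) := by
    rw [setIntegral_const, smul_eq_mul, Real.volume_real_Ioc_of_le (by linarith)]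
    ring
  rw [h1]
  have h2 : (∫ _t in Ioc 0 y, (1 - F y)) ≤ ∫ t in Ioc 0 y, (1 - F t) := by
    refine setIntegral_mono_on (integrableOn_const ?_) hIoc measurableSet_Ioc
      fun t ht => by have := hF.1 ht.2; linarith
    rw [Real.volume_Ioc]; exact ENNReal.ofReal_ne_top
  refine h2.trans (setIntegral_mono_set hInt' ?_ ?_)
  · exact Filter.Eventually.of_forall fun x => by
      have := hF.le_one x; simp only [Pi.zero_apply]; linarith
  · exact HasSubset.Subset.eventuallyLE fun x hx => hx.1

lemma phi_le {α : ℝ} (hα : α ∈ Set.Ioo (0:ℝ) 1) {F : ℝ → ℝ} (hF : IsCDF F)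
    (hInt : IntegrableOn F (Iic 0)) (v : ℝ) :
    α * v - ∫ t in Iio v, F t ≤ α * VaR α F - ∫ t in Iio (VaR α F), F t := by
  have hIv : IntegrableOn F (Iio v) := integrableOn_Iio hF hInt v
  have hIw : IntegrableOn F (Iio (VaR α F)) := integrableOn_Iio hF hInt (VaR α F)
  rcases le_total v (VaR α F) with h | h
  · have hunion : Iio v ∪ Ico v (VaR α F) = Iio (VaR α F) := by
      ext x
      simp only [mem_union, mem_Iio, mem_Ico]
      constructor
      · rintro (hx | ⟨_, hx2⟩)
        · exact lt_of_lt_of_le hx h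
        · exact hx2
      · intro hx
        rcases lt_or_ge x v with hx' | hx'
        · exact Or.inl hx'
        · exact Or.inr ⟨hx', hx⟩
    have hdisj : Disjoint (Iio v) (Ico v (VaR α F)) := by
      rw [Set.disjoint_left]; rintro x hx ⟨h1, _⟩; exact absurd h1 (not_le.2 hx)
    have hIco : IntegrableOn F (Ico v (VaR α F)) := hIw.mono_set fun x hx => hx.2
    have hsplit : (∫ t in Iio (VaR α F), F t)
        = (∫ t in Iio v, F t) + ∫ t in Ico v (VaR α F), F t := by
      rw [← hunion, setIntegral_union hdisj measurableSet_Ico hIv hIco]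
    have hb : (∫ t in Ico v (VaR α F), F t) ≤ α * (VaR α F - v) := by
      have hle : (∫ t in Ico v (VaR α F), F t) ≤ ∫ _t in Ico v (VaR α F), α := by
        refine setIntegral_mono_on hIco (integrableOn_const ?_) measurableSet_Ico
          fun t ht => (F_lt_alpha_of_lt_VaR hα.1 hF ht.2).le
        rw [Real.volume_Ico]; exact ENNReal.ofReal_ne_top
      have hc : (∫ _t in Ico v (VaR α F), α) = α * (VaR α F - v) := by
        rw [setIntegral_const, smul_eq_mul, Real.volume_real_Ico_of_le (by linarith)]
        ring
      linarith [hle, hc.le, hc.ge]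
    linarith [hsplit, hb]
  · have hunion : Iio (VaR α F) ∪ Ico (VaR α F) v = Iio v := by
      ext x
      simp only [mem_union, mem_Iio, mem_Ico]
      constructor
      · rintro (hx | ⟨_, hx2⟩)
        · exact lt_of_lt_of_le hx h
        · exact hx2
      · intro hx
        rcases lt_or_ge x (VaR α F) with hx' | hx'
        · exact Or.inl hx'
        · exact Or.inr ⟨hx', hx⟩
    have hdisj : Disjoint (Iio (VaR α F)) (Ico (VaR α F) v) := by
      rw [Set.disjoint_left]; rintro x hx ⟨h1, _⟩; exact absurd h1 (not_le.2 hx)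
    have hIco : IntegrableOn F (Ico (VaR α F) v) := hIv.mono_set fun x hx => hx.2
    have hsplit : (∫ t in Iio v, F t)
        = (∫ t in Iio (VaR α F), F t) + ∫ t in Ico (VaR α F) v, F t := by
      rw [← hunion, setIntegral_union hdisj measurableSet_Ico hIw hIco]
    have hb : α * (v - VaR α F) ≤ ∫ t in Ico (VaR α F) v, F t := by
      have hle : (∫ _t in Ico (VaR α F) v, α) ≤ ∫ t in Ico (VaR α F) v, F t := by
        refine setIntegral_mono_on (integrableOn_const ?_) hIco measurableSet_Ico
          fun t ht => le_trans (alpha_le_F_VaR hα hF) (hF.1 ht.1)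
        rw [Real.volume_Ico]; exact ENNReal.ofReal_ne_top
      have hc : (∫ _t in Ico (VaR α F) v, α) = α * (v - VaR α F) := by
        rw [setIntegral_const, smul_eq_mul, Real.volume_real_Ico_of_le (by linarith)]
        ring
      linarith [hle, hc.le, hc.ge]
    linarith [hsplit, hb]

lemma abs_VaR_le {α : ℝ} (hα : α ∈ Set.Ioo (0:ℝ) 1) {F : ℝ → ℝ} (hF : IsCDF F)
    (hInt : IntegrableOn F (Iic 0)) (hInt' : IntegrableOn (fun y => 1 - F y) (Ioi 0))
    {c : ℝ} (hc : 0 < c) (h1 : (∫ t in Iic (0:ℝ), F t) ≤ c)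
    (h2 : (∫ t in Ioi (0:ℝ), (1 - F t)) ≤ c) :
    |VaR α F| ≤ c / min α (1 - α) := by
  obtain ⟨hα0, hα1⟩ := hα
  have h1α : (0:ℝ) < 1 - α := by linarith
  have hμ0 : 0 < min α (1 - α) := lt_min hα0 h1α
  rw [abs_le]
  constructor
  · refine le_csInf (hF.nonempty_S hα1) fun y hy => ?_
    simp only [Set.mem_setOf_eq] at hy
    by_contra hcon
    push_neg at hcon
    have hcd : 0 < c / min α (1 - α) := div_pos hc hμ0
    have hy0 : y ≤ 0 := by linarith
    have hmass := (neg_mass hF hInt hy0).trans h1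
    have h3 : α * (-y) ≤ c :=
      le_trans (mul_le_mul_of_nonneg_right hy (by linarith)) hmass
    have h4 : c / α ≤ c / min α (1 - α) :=
      div_le_div_of_nonneg_left hc.le hμ0 (min_le_left _ _)
    have h5 : c / α < -y := by linarith
    have h6 : c < -y * α := (div_lt_iff₀ hα0).1 h5
    nlinarith
  · have hy0 : (0:ℝ) ≤ c / (1 - α) := le_of_lt (div_pos hc h1α)
    have ht := (pos_tail hF hInt' hy0).trans h2
    have hyv : c = (1 - α) * (c / (1 - α)) := by field_simp
    have hpos : 0 < c / (1 - α) := div_pos hc h1α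
    have h7 : 1 - F (c / (1 - α)) ≤ 1 - α := by nlinarith
    have h8 : α ≤ F (c / (1 - α)) := by linarith
    exact (VaR_le hα0 hF h8).trans
      (div_le_div_of_nonneg_left hc.le hμ0 (min_le_right _ _))

lemma int_diff_bound {F G : ℝ → ℝ} (hF : IsCDF F) (hG : IsCDF G)
    (hIntF : IntegrableOn F (Iic 0)) (hIntG : IntegrableOn G (Iic 0))
    {ε : ℝ} (hsup : ∀ y, |F y - G y| ≤ ε)
    (hD : |∫ t in Iic (0:ℝ), (F t - G t)| ≤ ε) (v : ℝ) :
    |∫ t in Iio v, (F t - G t)| ≤ ε * (1 + |v|) := by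
  have hε0 : 0 ≤ ε := le_trans (abs_nonneg _) (hsup 0)
  have hIv : IntegrableOn (fun t => F t - G t) (Iio v) :=
    (integrableOn_Iio hF hIntF v).sub (integrableOn_Iio hG hIntG v)
  have hmeas : AEStronglyMeasurable (fun t => F t - G t)
      (MeasureTheory.volume.restrict (Icc v 0)) :=
    ((hF.1.measurable.sub hG.1.measurable)).aestronglyMeasurable
  have hmeas' : AEStronglyMeasurable (fun t => F t - G t)
      (MeasureTheory.volume.restrict (Ico 0 v)) :=
    ((hF.1.measurable.sub hG.1.measurable)).aestronglyMeasurable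
  rcases le_total v 0 with h | h
  · have hunion : Iio v ∪ Icc v 0 = Iic 0 := by
      ext x
      simp only [mem_union, mem_Iio, mem_Icc, mem_Iic]
      constructor
      · rintro (hx | ⟨_, hx2⟩)
        · exact le_trans hx.le h
        · exact hx2
      · intro hx
        rcases lt_or_ge x v with h' | h'
        · exact Or.inl h'
        · exact Or.inr ⟨h', hx⟩
    have hdisj : Disjoint (Iio v) (Icc v 0) := by
      rw [Set.disjoint_left]; rintro x hx ⟨h1, _⟩; exact absurd h1 (not_le.2 hx)
    have hIcc : IntegrableOn (fun t => F t - G t) (Icc v 0) :=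
      (hIntF.mono_set fun x hx => hx.2).sub (hIntG.mono_set fun x hx => hx.2)
    have hsplit : (∫ t in Iic (0:ℝ), (F t - G t))
        = (∫ t in Iio v, (F t - G t)) + ∫ t in Icc v 0, (F t - G t) := by
      rw [← hunion, setIntegral_union hdisj measurableSet_Icc hIv hIcc]
    have hIccbd : |∫ t in Icc v 0, (F t - G t)| ≤ ε * (-v) := by
      have hb := norm_setIntegral_le_of_norm_le_const (μ := MeasureTheory.volume)
        (s := Icc v 0) (C := ε)
        (by rw [Real.volume_Icc]; exact ENNReal.ofReal_lt_top)
        (fun x _ => by rw [Real.norm_eq_abs]; exact hsup x)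
      rw [Real.norm_eq_abs, Real.volume_real_Icc_of_le (by linarith)] at hb
      nlinarith [hb]
    have heq : (∫ t in Iio v, (F t - G t))
        = (∫ t in Iic (0:ℝ), (F t - G t)) - ∫ t in Icc v 0, (F t - G t) := by
      linarith [hsplit]
    rw [heq, abs_of_nonpos h]
    calc |(∫ t in Iic (0:ℝ), (F t - G t)) - ∫ t in Icc v 0, (F t - G t)|
        ≤ |∫ t in Iic (0:ℝ), (F t - G t)| + |∫ t in Icc v 0, (F t - G t)| := abs_sub _ _
      _ ≤ ε + ε * (-v) := add_le_add hD hIccbd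
      _ = ε * (1 + -v) := by ring
  · have hunion : Iio 0 ∪ Ico 0 v = Iio v := by
      ext x
      simp only [mem_union, mem_Iio, mem_Ico]
      constructor
      · rintro (hx | ⟨_, hx2⟩)
        · exact lt_of_lt_of_le hx h
        · exact hx2
      · intro hx
        rcases lt_or_ge x 0 with h' | h'
        · exact Or.inl h'
        · exact Or.inr ⟨h', hx⟩
    have hdisj : Disjoint (Iio 0) (Ico 0 v) := by
      rw [Set.disjoint_left]; rintro x hx ⟨h1, _⟩; exact absurd h1 (not_le.2 hx)
    have hI0' : IntegrableOn (fun t => F t - G t) (Iic 0) := hIntF.sub hIntG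
    have hI0 : IntegrableOn (fun t => F t - G t) (Iio 0) :=
      hI0'.mono_set fun x (hx : x < 0) => le_of_lt hx
    have hIco : IntegrableOn (fun t => F t - G t) (Ico 0 v) := by
      have hFI : IntegrableOn F (Icc 0 v) :=
        MonotoneOn.integrableOn_isCompact isCompact_Icc (hF.1.monotoneOn _)
      have hGI : IntegrableOn G (Icc 0 v) :=
        MonotoneOn.integrableOn_isCompact isCompact_Icc (hG.1.monotoneOn _)
      have hFGI : IntegrableOn (fun t => F t - G t) (Icc 0 v) := hFI.sub hGI
      exact hFGI.mono_set Ico_subset_Icc_self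
    have hsplit : (∫ t in Iio v, (F t - G t))
        = (∫ t in Iio (0:ℝ), (F t - G t)) + ∫ t in Ico 0 v, (F t - G t) := by
      rw [← hunion, setIntegral_union hdisj measurableSet_Ico hI0 hIco]
    have hIcobd : |∫ t in Ico 0 v, (F t - G t)| ≤ ε * v := by
      have hb := norm_setIntegral_le_of_norm_le_const (μ := MeasureTheory.volume)
        (s := Ico 0 v) (C := ε)
        (by rw [Real.volume_Ico]; exact ENNReal.ofReal_lt_top)
        (fun x _ => by rw [Real.norm_eq_abs]; exact hsup x)
      rw [Real.norm_eq_abs, Real.volume_real_Ico_of_le (by linarith)] at hb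
      nlinarith [hb]
    have hIic : (∫ t in Iio (0:ℝ), (F t - G t)) = ∫ t in Iic (0:ℝ), (F t - G t) :=
      (integral_Iic_eq_integral_Iio).symm
    rw [hsplit, hIic, abs_of_nonneg h]
    calc |(∫ t in Iic (0:ℝ), (F t - G t)) + ∫ t in Ico 0 v, (F t - G t)|
        ≤ |∫ t in Iic (0:ℝ), (F t - G t)| + |∫ t in Ico 0 v, (F t - G t)| := abs_add_le _ _
      _ ≤ ε + ε * v := add_le_add hD hIcobd
      _ = ε * (1 + v) := by ring

end CVaRAux

open CVaRAux in
/-- Strong stability of CVaR: the modulus-of-continuity bound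
`|CVaR_α(G) − CVaR_α(F)| ≤ (1/α)(1 + max{1, 3m(F)}/min{α,1−α})(d(F,G) + d(F,G)²)`. -/
theorem CVaR_strong_stability (α : ℝ) (hα : α ∈ Set.Ioo (0 : ℝ) 1)
    (F G : ℝ → ℝ) (hF : IsCDF F) (hG : IsCDF G)
    (hIntF : IntegrableOn F (Set.Iic (0 : ℝ)))
    (hIntF' : IntegrableOn (fun y => 1 - F y) (Set.Ioi (0 : ℝ)))
    (hIntG : IntegrableOn G (Set.Iic (0 : ℝ)))
    (hIntG' : IntegrableOn (fun y => 1 - G y) (Set.Ioi (0 : ℝ))) :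
    |CVaR α G - CVaR α F| ≤
      (1 / α) * (1 + max 1 (3 * mTail F) / min α (1 - α)) *
        (dDist F G + dDist F G ^ 2) := by
  obtain ⟨hα0, hα1⟩ := hα
  have h1α : (0:ℝ) < 1 - α := by linarith
  set ε := dDist F G with hεdef
  set m := mTail F with hmdef
  set μ := min α (1 - α) with hμdef
  have hμ0 : 0 < μ := lt_min hα0 h1α
  have hm1 : (1:ℝ) ≤ m := le_max_left _ _
  have hmIic : (∫ t in Set.Iic (0:ℝ), F t) ≤ m :=
    le_trans (le_max_left _ _) (le_max_right _ _)
  have hmIoi : (∫ t in Set.Ioi (0:ℝ), (1 - F t)) ≤ m :=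
    le_trans (le_max_right _ _) (le_max_right _ _)
  have hsup : ∀ y, |F y - G y| ≤ ε := by
    intro y
    refine le_trans ?_ (le_max_left _ _)
    refine le_ciSup (f := fun y : ℝ => |F y - G y|) ⟨2, fun x hx => ?_⟩ y
    obtain ⟨z, rfl⟩ := hx
    have h1 := hF.nonneg z; have h2 := hF.le_one z
    have h3 := hG.nonneg z; have h4 := hG.le_one z
    exact abs_le.2 ⟨by simp; linarith, by simp; linarith⟩
  have hε0 : 0 ≤ ε := le_trans (abs_nonneg _) (hsup 0)
  have hDIic : |∫ t in Set.Iic (0:ℝ), (F t - G t)| ≤ ε :=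
    le_trans (le_max_left _ _) (le_max_right _ _)
  have hDIoi : |∫ t in Set.Ioi (0:ℝ), (F t - G t)| ≤ ε :=
    le_trans (le_max_right _ _) (le_max_right _ _)
  clear_value ε m μ
  have hGIic : (∫ t in Set.Iic (0:ℝ), G t) ≤ m + ε := by
    have hsplit : (∫ t in Set.Iic (0:ℝ), (F t - G t))
        = (∫ t in Set.Iic (0:ℝ), F t) - ∫ t in Set.Iic (0:ℝ), G t :=
      integral_sub hIntF hIntG
    have hab := abs_le.1 hDIic
    linarith [hab.1, hab.2]
  have hGIoi : (∫ t in Set.Ioi (0:ℝ), (1 - G t)) ≤ m + ε := by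
    have hsplit : (∫ t in Set.Ioi (0:ℝ), (F t - G t))
        = (∫ t in Set.Ioi (0:ℝ), (1 - G t)) - ∫ t in Set.Ioi (0:ℝ), (1 - F t) := by
      rw [← integral_sub hIntG' hIntF']
      congr 1; ext t; ring
    have hab := abs_le.1 hDIoi
    linarith [hab.1, hab.2]
  have hm0 : (0:ℝ) < m := by linarith
  have hmε0 : (0:ℝ) < m + ε := by linarith
  have hvF : |VaR α F| ≤ m / μ := by
    rw [hμdef]; exact abs_VaR_le ⟨hα0, hα1⟩ hF hIntF hIntF' hm0 hmIic hmIoi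
  have hvG : |VaR α G| ≤ (m + ε) / μ := by
    rw [hμdef]; exact abs_VaR_le ⟨hα0, hα1⟩ hG hIntG hIntG' hmε0 hGIic hGIoi
  have hvF' : |VaR α F| ≤ (m + ε) / μ := by
    refine hvF.trans ((div_le_div_iff_of_pos_right hμ0).2 (by linarith))
  have keyF := phi_le ⟨hα0, hα1⟩ hF hIntF (VaR α G)
  have keyG := phi_le ⟨hα0, hα1⟩ hG hIntG (VaR α F)
  have hb1 := int_diff_bound hF hG hIntF hIntG hsup hDIic (VaR α G)
  have hb2 := int_diff_bound hF hG hIntF hIntG hsup hDIic (VaR α F)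
  have hs1 : (∫ t in Set.Iio (VaR α G), (F t - G t))
      = (∫ t in Set.Iio (VaR α G), F t) - ∫ t in Set.Iio (VaR α G), G t :=
    integral_sub (integrableOn_Iio hF hIntF _) (integrableOn_Iio hG hIntG _)
  have hs2 : (∫ t in Set.Iio (VaR α F), (F t - G t))
      = (∫ t in Set.Iio (VaR α F), F t) - ∫ t in Set.Iio (VaR α F), G t :=
    integral_sub (integrableOn_Iio hF hIntF _) (integrableOn_Iio hG hIntG _)
  have hαne : α ≠ 0 := ne_of_gt hα0
  have hdiff : α * (CVaR α G - CVaR α F)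
      = (α * VaR α G - ∫ t in Set.Iio (VaR α G), G t)
        - (α * VaR α F - ∫ t in Set.Iio (VaR α F), F t) := by
    rw [CVaR, CVaR]
    field_simp
  -- bound ε * (1 + |v|) by R for both v's
  have hR1 : ε * (1 + |VaR α G|) ≤ ε * (1 + (m + ε) / μ) :=
    mul_le_mul_of_nonneg_left (by linarith [hvG]) hε0
  have hR2 : ε * (1 + |VaR α F|) ≤ ε * (1 + (m + ε) / μ) :=
    mul_le_mul_of_nonneg_left (by linarith [hvF']) hε0
  have hub : α * (CVaR α G - CVaR α F) ≤ ε * (1 + (m + ε) / μ) := by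
    have h1 := (abs_le.1 hb1).2
    rw [hs1] at h1
    linarith [hdiff, keyF, hR1]
  have hlb : -(ε * (1 + (m + ε) / μ)) ≤ α * (CVaR α G - CVaR α F) := by
    have h1 := (abs_le.1 hb2).1
    rw [hs2] at h1
    linarith [hdiff, keyG, hR2]
  have habs : |CVaR α G - CVaR α F| ≤ (1 / α) * (ε * (1 + (m + ε) / μ)) := by
    have h1 : |α * (CVaR α G - CVaR α F)| ≤ ε * (1 + (m + ε) / μ) := abs_le.2 ⟨hlb, hub⟩
    rw [abs_mul, abs_of_pos hα0] at h1
    rw [← le_div_iff₀' hα0] at h1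
    calc |CVaR α G - CVaR α F| ≤ ε * (1 + (m + ε) / μ) / α := h1
      _ = (1 / α) * (ε * (1 + (m + ε) / μ)) := by ring
  have hmax : max 1 (3 * m) = 3 * m := max_eq_right (by linarith)
  rw [hmax]
  have hfin : ε * (1 + (m + ε) / μ) ≤ (1 + 3 * m / μ) * (ε + ε ^ 2) := by
    have hμne : μ ≠ 0 := ne_of_gt hμ0
    have e1 : ε * (1 + (m + ε) / μ) * μ = ε * (μ + (m + ε)) := by field_simp
    have e2 : (1 + 3 * m / μ) * (ε + ε ^ 2) * μ = (μ + 3 * m) * (ε + ε ^ 2) := by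
      field_simp
    have h3 : ε * (1 + (m + ε) / μ) * μ ≤ (1 + 3 * m / μ) * (ε + ε ^ 2) * μ := by
      rw [e1, e2]
      nlinarith [mul_nonneg (mul_nonneg hε0 hε0) hμ0.le,
        mul_nonneg hε0 (by linarith : (0:ℝ) ≤ m - 1),
        mul_nonneg (sq_nonneg ε) (by linarith : (0:ℝ) ≤ 3 * m - 1)]
    exact le_of_mul_le_mul_right h3 hμ0
  calc |CVaR α G - CVaR α F| ≤ (1 / α) * (ε * (1 + (m + ε) / μ)) := habs
    _ ≤ (1 / α) * ((1 + 3 * m / μ) * (ε + ε ^ 2)) :=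
        mul_le_mul_of_nonneg_left hfin (by positivity)
    _ = 1 / α * (1 + 3 * m / μ) * (ε + ε ^ 2) := by ring
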